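/- (Cantor Intersection Theorem for PM spaces) A probabilistic metric space (S, 𝓕, τ) under a continuous triangle function τ is complete if and only if for every nested sequence {S_n} (S₁ ⊇ S₂ ⊇ S₃ ⊇ …) of nonempty subsets of S that are closed in the strong topology and satisfy D_{S_n} → H₀ pointwise as n → ∞, the intersection ⋂_{n=1}^∞ S_n consists of exactly one point. -/

import Mathlib

open Set Filter Topology

/-- A distance distribution function: nondecreasing, left-continuous,
with values in `[0,1]`, and vanishing on `(-∞, 0]`. -/
def IsDDF (F : ℝ → ℝ) : Prop :=
  Monotone F ∧ (∀ x : ℝ, ContinuousWithinAt F (Set.Iio x) x) ∧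
    (∀ x, 0 ≤ F x ∧ F x ≤ 1) ∧ ∀ x ≤ 0, F x = 0

/-- The condition `(F, G; h)` in the definition of the modified Lévy distance. -/
def LevyCond (F G : ℝ → ℝ) (h : ℝ) : Prop :=
  ∀ x ∈ Set.Ioo (-(1 / h)) (1 / h), F (x - h) - h ≤ G x ∧ G x ≤ F (x + h) + h

/-- The modified Lévy distance on `Δ⁺`. -/
noncomputable def dL (F G : ℝ → ℝ) : ℝ :=
  sInf {h : ℝ | h ∈ Set.Ioc (0 : ℝ) 1 ∧ LevyCond F G h ∧ LevyCond G F h}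

/-- The distribution function `H₀`, equal to `0` on `(-∞, 0]` and `1` on `(0, ∞)`. -/
noncomputable def H0 : ℝ → ℝ := fun x => if x ≤ 0 then 0 else 1

/-- A triangle function: a binary operation on `Δ⁺` that is commutative, associative,
nondecreasing in each argument, and has `H₀` as identity. -/
def IsTriangleFunction (τ : (ℝ → ℝ) → (ℝ → ℝ) → (ℝ → ℝ)) : Prop :=
  (∀ F G, IsDDF F → IsDDF G → IsDDF (τ F G)) ∧
  (∀ F G, IsDDF F → IsDDF G → τ F G = τ G F) ∧
  (∀ F G K, IsDDF F → IsDDF G → IsDDF K → τ (τ F G) K = τ F (τ G K)) ∧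
  (∀ F G K, IsDDF F → IsDDF G → IsDDF K → F ≤ G → τ F K ≤ τ G K) ∧
  (∀ F, IsDDF F → τ H0 F = F)

/-- Continuity of a triangle function with respect to the modified Lévy metric on `Δ⁺`
(sequential continuity, which is equivalent since `d_L` is a metric). -/
def ContinuousTF (τ : (ℝ → ℝ) → (ℝ → ℝ) → (ℝ → ℝ)) : Prop :=
  ∀ (F G : ℕ → ℝ → ℝ) (F₀ G₀ : ℝ → ℝ),
    (∀ n, IsDDF (F n)) → (∀ n, IsDDF (G n)) → IsDDF F₀ → IsDDF G₀ →
    Filter.Tendsto (fun n => dL (F n) F₀) Filter.atTop (nhds 0) →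
    Filter.Tendsto (fun n => dL (G n) G₀) Filter.atTop (nhds 0) →
    Filter.Tendsto (fun n => dL (τ (F n) (G n)) (τ F₀ G₀)) Filter.atTop (nhds 0)

/-- `(S, 𝓕, τ)` is a probabilistic metric space. -/
structure IsPMSpace {S : Type*} (𝓕 : S → S → ℝ → ℝ)
    (τ : (ℝ → ℝ) → (ℝ → ℝ) → (ℝ → ℝ)) : Prop where
  ddf : ∀ p q, IsDDF (𝓕 p q)
  tf : IsTriangleFunction τ
  refl : ∀ p, 𝓕 p p = H0
  ne : ∀ p q, p ≠ q → 𝓕 p q ≠ H0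
  symm : ∀ p q, 𝓕 p q = 𝓕 q p
  tri : ∀ p q r, τ (𝓕 p q) (𝓕 q r) ≤ 𝓕 p r

/-- The strong neighborhood `N_p(t) = {q : F_{p,q}(t) > 1 - t}`. -/
def Npt {S : Type*} (𝓕 : S → S → ℝ → ℝ) (p : S) (t : ℝ) : Set S :=
  {q | 1 - t < 𝓕 p q t}

/-- A set is open in the strong topology iff it contains a strong neighborhood
of each of its points. -/
def StrongOpen {S : Type*} (𝓕 : S → S → ℝ → ℝ) (U : Set S) : Prop :=
  ∀ p ∈ U, ∃ t > 0, Npt 𝓕 p t ⊆ U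

/-- A set is closed in the strong topology iff its complement is open. -/
def StrongClosed {S : Type*} (𝓕 : S → S → ℝ → ℝ) (A : Set S) : Prop :=
  StrongOpen 𝓕 Aᶜ

/-- Convergence of a sequence in a PM space (the `(ε, λ)`-sense). -/
def PMConv {S : Type*} (𝓕 : S → S → ℝ → ℝ) (p : ℕ → S) (p₀ : S) : Prop :=
  ∀ ε > (0 : ℝ), ∀ lam ∈ Set.Ioo (0 : ℝ) 1, ∃ n₀ : ℕ, ∀ n ≥ n₀, 1 - lam < 𝓕 (p n) p₀ ε

/-- Cauchy sequences in a PM space. -/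
def PMCauchy {S : Type*} (𝓕 : S → S → ℝ → ℝ) (p : ℕ → S) : Prop :=
  ∀ ε > (0 : ℝ), ∀ lam ∈ Set.Ioo (0 : ℝ) 1, ∃ n₀ : ℕ, ∀ n ≥ n₀, ∀ m ≥ n₀,
    1 - lam < 𝓕 (p n) (p m) ε

/-- A PM space is complete if every Cauchy sequence converges. -/
def PMComplete {S : Type*} (𝓕 : S → S → ℝ → ℝ) : Prop :=
  ∀ p : ℕ → S, PMCauchy 𝓕 p → ∃ p₀, PMConv 𝓕 p p₀

/-- The probabilistic diameter of a set: `D_A(x) = sup_{t<x} inf_{p,q ∈ A} F_{p,q}(t)`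
for `x > 0`, and `0` for `x ≤ 0`. -/
noncomputable def probDiam {S : Type*} (𝓕 : S → S → ℝ → ℝ) (A : Set S) (x : ℝ) : ℝ :=
  if x ≤ 0 then 0
  else sSup ((fun t => sInf ((fun pq : S × S => 𝓕 pq.1 pq.2 t) '' (A ×ˢ A))) '' Set.Iio x)
lemma H0_isDDF : IsDDF H0 := by
  refine ⟨?_, ?_, ?_, ?_⟩
  · intro a b hab
    by_cases ha : a ≤ 0
    · simp only [H0, if_pos ha]
      split_ifs <;> norm_num
    · have hb : ¬ b ≤ 0 := fun h => ha (hab.trans h)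
      simp [H0, ha, hb]
  · intro x
    by_cases hx : x ≤ 0
    · have h0 : H0 x = 0 := if_pos hx
      unfold ContinuousWithinAt
      rw [h0]
      apply Tendsto.congr' (f₁ := fun _ => (0:ℝ))
      · filter_upwards [self_mem_nhdsWithin] with y hy
        exact (if_pos (le_of_lt (lt_of_lt_of_le hy hx))).symm
      · exact tendsto_const_nhds
    · have h0 : H0 x = 1 := if_neg hx
      unfold ContinuousWithinAt
      rw [h0]
      push_neg at hx
      apply Tendsto.congr' (f₁ := fun _ => (1:ℝ))
      · filter_upwards [Ioo_mem_nhdsLT_of_mem ⟨hx, le_refl _⟩] with y hy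
        · exact (if_neg (not_le.2 hy.1)).symm
      · exact tendsto_const_nhds
  · intro x; unfold H0; split_ifs <;> norm_num
  · intro x hx; exact if_pos hx

lemma one_mem_levy {F G : ℝ → ℝ} (hF : IsDDF F) (hG : IsDDF G) :
    (1:ℝ) ∈ {h : ℝ | h ∈ Set.Ioc (0 : ℝ) 1 ∧ LevyCond F G h ∧ LevyCond G F h} := by
  refine ⟨⟨one_pos, le_refl _⟩, ?_, ?_⟩ <;>
  · intro x _
    constructor
    · nlinarith [(hF.2.2.1 (x-1)).2, (hG.2.2.1 x).1, (hG.2.2.1 (x-1)).2, (hF.2.2.1 x).1]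
    · nlinarith [(hF.2.2.1 (x+1)).1, (hG.2.2.1 x).2, (hG.2.2.1 (x+1)).1, (hF.2.2.1 x).2]

lemma dL_nonneg (F G : ℝ → ℝ) : 0 ≤ dL F G :=
  Real.sInf_nonneg (fun _ hx => le_of_lt hx.1.1)

/-- Lemma A: if `F η > 1 - η` then `dL F H0 ≤ η`. -/
lemma dL_le_of_gt {F : ℝ → ℝ} (hF : IsDDF F) {η : ℝ} (hη : η ∈ Set.Ioc (0:ℝ) 1)
    (h : 1 - η < F η) : dL F H0 ≤ η := by
  apply csInf_le ⟨0, fun x hx => le_of_lt hx.1.1⟩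
  refine ⟨hη, ?_, ?_⟩
  · intro x _
    constructor
    · by_cases hx0 : x ≤ 0
      · have : F (x - η) = 0 := hF.2.2.2 _ (by linarith [hη.1])
        rw [this]
        simp only [H0, if_pos hx0]
        linarith [hη.1]
      · simp only [H0, if_neg hx0]
        linarith [(hF.2.2.1 (x - η)).2, hη.1]
    · by_cases hx0 : x ≤ 0
      · simp only [H0, if_pos hx0]
        linarith [(hF.2.2.1 (x + η)).1, hη.1]
      · simp only [H0, if_neg hx0]
        have : F η ≤ F (x + η) := hF.1 (by linarith [not_le.1 hx0])
        linarith
  · intro x _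
    constructor
    · by_cases hx0 : x - η ≤ 0
      · simp only [H0, if_pos hx0]
        linarith [(hF.2.2.1 x).1, hη.1]
      · simp only [H0, if_neg hx0]
        have : F η ≤ F x := hF.1 (by linarith [not_le.1 hx0])
        linarith
    · by_cases hx0 : x + η ≤ 0
      · have : F x = 0 := hF.2.2.2 _ (by linarith [hη.1])
        rw [this]
        simp only [H0]
        split_ifs <;> linarith [hη.1]
      · simp only [H0, if_neg hx0]
        linarith [(hF.2.2.1 x).2, hη.1]

/-- Lemma B: if `dL K H0 < h ≤ 1` then `K t > 1 - h` for `t ≥ h`. -/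
lemma gt_of_dL_lt {K : ℝ → ℝ} (hK : IsDDF K) {h t : ℝ} (h0 : 0 < h) (h1 : h ≤ 1)
    (hd : dL K H0 < h) (ht : h ≤ t) : 1 - h < K t := by
  obtain ⟨h', ⟨⟨hh'0, hh'1⟩, _, hcond⟩, hlt⟩ :=
    exists_lt_of_csInf_lt ⟨1, one_mem_levy hK H0_isDDF⟩ hd
  have hmem : h ∈ Set.Ioo (-(1 / h')) (1 / h') := by
    constructor
    · have : 0 < 1 / h' := by positivity
      linarith
    · rw [lt_div_iff₀ hh'0]
      nlinarith
  have := (hcond h hmem).1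
  have hH : H0 (h - h') = 1 := if_neg (by linarith)
  rw [hH] at this
  have := hK.1 ht
  linarith
/-- Key uniformity lemma: continuity of `τ` at `(H0, H0)` in `(ε, η)` form. -/
lemma ulam {τ : (ℝ → ℝ) → (ℝ → ℝ) → (ℝ → ℝ)} (htf : IsTriangleFunction τ)
    (hτ : ContinuousTF τ) :
    ∀ t > (0:ℝ), ∃ η ∈ Set.Ioo (0:ℝ) 1, ∀ F G, IsDDF F → IsDDF G →
      1 - η < F η → 1 - η < G η → 1 - t < τ F G t := by
  intro t ht
  by_contra hcon
  push_neg at hcon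
  have hmem : ∀ n : ℕ, (1:ℝ) / (n + 2) ∈ Set.Ioo (0:ℝ) 1 := by
    intro n
    constructor
    · positivity
    · rw [div_lt_one (by positivity)]
      have : (0:ℝ) ≤ (n:ℝ) := Nat.cast_nonneg n
      linarith
  choose F G hF hG h1 h2 h3 using fun n : ℕ => hcon (1 / (n + 2)) (hmem n)
  have hten : Tendsto (fun n : ℕ => (1:ℝ) / (n + 2)) atTop (𝓝 0) := by
    have h := (tendsto_one_div_add_atTop_nhds_zero_nat (𝕜 := ℝ)).comp (tendsto_add_atTop_nat 1)
    convert h using 2 with n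
    simp only [Function.comp_apply]
    push_cast
    ring
  have hdF : Tendsto (fun n => dL (F n) H0) atTop (𝓝 0) :=
    squeeze_zero (fun n => dL_nonneg _ _)
      (fun n => dL_le_of_gt (hF n) ⟨(hmem n).1, (hmem n).2.le⟩ (h1 n)) hten
  have hdG : Tendsto (fun n => dL (G n) H0) atTop (𝓝 0) :=
    squeeze_zero (fun n => dL_nonneg _ _)
      (fun n => dL_le_of_gt (hG n) ⟨(hmem n).1, (hmem n).2.le⟩ (h2 n)) hten
  have hid : τ H0 H0 = H0 := htf.2.2.2.2 H0 H0_isDDF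
  have hten2 := hτ F G H0 H0 hF hG H0_isDDF H0_isDDF hdF hdG
  rw [hid] at hten2
  have hev : ∀ᶠ n in atTop, dL (τ (F n) (G n)) H0 < min t 1 :=
    hten2.eventually (eventually_lt_nhds (by positivity))
  obtain ⟨n, hn⟩ := hev.exists
  have := gt_of_dL_lt (htf.1 _ _ (hF n) (hG n)) (by positivity) (min_le_right t 1) hn
    (min_le_left t 1)
  have h3n := h3 n
  linarith [min_le_left t 1]

/-- The strong closure of a set. -/
def scl {S : Type*} (𝓕 : S → S → ℝ → ℝ) (A : Set S) : Set S :=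
  {q | ∀ t > (0:ℝ), ∃ a ∈ A, 1 - t < 𝓕 q a t}

lemma subset_scl {S : Type*} {𝓕 : S → S → ℝ → ℝ} {τ} (hPM : IsPMSpace 𝓕 τ)
    (A : Set S) : A ⊆ scl 𝓕 A := by
  intro a ha t ht
  refine ⟨a, ha, ?_⟩
  rw [hPM.refl a]
  simp only [H0, if_neg (not_le.2 ht)]
  linarith

lemma scl_closed {S : Type*} {𝓕 : S → S → ℝ → ℝ} {τ} (hPM : IsPMSpace 𝓕 τ)
    (hτ : ContinuousTF τ) (A : Set S) : StrongClosed 𝓕 (scl 𝓕 A) := by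
  intro p hp
  simp only [Set.mem_compl_iff, scl, Set.mem_setOf_eq] at hp
  push_neg at hp
  obtain ⟨t, ht, hA⟩ := hp
  obtain ⟨η, hη, hU⟩ := ulam hPM.tf hτ t ht
  refine ⟨η, hη.1, ?_⟩
  intro q hq
  have hq' : 1 - η < 𝓕 p q η := hq
  simp only [Set.mem_compl_iff, scl, Set.mem_setOf_eq]
  intro hmem
  obtain ⟨a, ha, hqa⟩ := hmem η hη.1
  have h1 : 1 - t < τ (𝓕 p q) (𝓕 q a) t :=
    hU _ _ (hPM.ddf p q) (hPM.ddf q a) hq' hqa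
  have h2 : τ (𝓕 p q) (𝓕 q a) t ≤ 𝓕 p a t := hPM.tri p q a t
  have h3 := hA a ha
  linarith
lemma probDiam_bddBelow {S : Type*} {𝓕 : S → S → ℝ → ℝ}
    (hd : ∀ p q, IsDDF (𝓕 p q)) (A : Set S) (t : ℝ) :
    ∀ y ∈ (fun pq : S × S => 𝓕 pq.1 pq.2 t) '' (A ×ˢ A), 0 ≤ y := by
  rintro y ⟨⟨a, b⟩, _, rfl⟩
  exact (hd a b).2.2.1 t |>.1

lemma probDiam_le_F {S : Type*} {𝓕 : S → S → ℝ → ℝ}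
    (hd : ∀ p q, IsDDF (𝓕 p q)) {A : Set S} {a b : S}
    (ha : a ∈ A) (hb : b ∈ A) (x : ℝ) :
    probDiam 𝓕 A x ≤ 𝓕 a b x := by
  unfold probDiam
  split_ifs with h
  · exact le_of_eq ((hd a b).2.2.2 x h).symm
  · apply Real.sSup_le
    · rintro y ⟨t, ht, rfl⟩
      calc sInf ((fun pq : S × S => 𝓕 pq.1 pq.2 t) '' (A ×ˢ A)) ≤ 𝓕 a b t :=
            csInf_le ⟨0, probDiam_bddBelow hd A t⟩ ⟨(a, b), ⟨ha, hb⟩, rfl⟩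
        _ ≤ 𝓕 a b x := (hd a b).1 (le_of_lt ht)
    · exact ((hd a b).2.2.1 x).1

lemma probDiam_le_one {S : Type*} {𝓕 : S → S → ℝ → ℝ}
    (hd : ∀ p q, IsDDF (𝓕 p q)) {A : Set S} (hA : A.Nonempty) (x : ℝ) :
    probDiam 𝓕 A x ≤ 1 := by
  obtain ⟨a, ha⟩ := hA
  exact (probDiam_le_F hd ha ha x).trans ((hd a a).2.2.1 x).2

lemma probDiam_ge {S : Type*} {𝓕 : S → S → ℝ → ℝ}
    (hd : ∀ p q, IsDDF (𝓕 p q)) {A : Set S} (hA : A.Nonempty)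
    {x c t : ℝ} (ht : t < x) (h : ∀ a ∈ A, ∀ b ∈ A, c ≤ 𝓕 a b t) (hx : 0 < x) :
    c ≤ probDiam 𝓕 A x := by
  obtain ⟨a₀, ha₀⟩ := hA
  unfold probDiam
  rw [if_neg (not_le.2 hx)]
  have hbdd : BddAbove ((fun t => sInf ((fun pq : S × S => 𝓕 pq.1 pq.2 t) '' (A ×ˢ A)))
      '' Set.Iio x) := by
    refine ⟨1, ?_⟩
    rintro y ⟨s, _, rfl⟩
    exact csInf_le_of_le ⟨0, probDiam_bddBelow hd A s⟩ ⟨(a₀, a₀), ⟨ha₀, ha₀⟩, rfl⟩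
      ((hd a₀ a₀).2.2.1 s).2
  refine le_trans ?_ (le_csSup hbdd ⟨t, ht, rfl⟩)
  refine le_csInf ?_ ?_
  · exact ⟨𝓕 a₀ a₀ t, ⟨(a₀, a₀), ⟨ha₀, ha₀⟩, rfl⟩⟩
  · rintro y ⟨⟨p, q⟩, ⟨hp, hq⟩, rfl⟩
    exact h p hp q hq
lemma key_tail {S : Type*} {𝓕 : S → S → ℝ → ℝ} {τ} (hPM : IsPMSpace 𝓕 τ)
    (hτ : ContinuousTF τ) {p : ℕ → S} (hp : PMCauchy 𝓕 p) {c : ℝ}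
    (hc : c ∈ Set.Ioo (0:ℝ) 1) :
    ∃ n₀ : ℕ, ∀ n ≥ n₀, ∀ q ∈ scl 𝓕 (p '' Set.Ici n), ∀ r ∈ scl 𝓕 (p '' Set.Ici n),
      1 - c < 𝓕 q r c := by
  obtain ⟨η₁, hη₁, hU1⟩ := ulam hPM.tf hτ c hc.1
  obtain ⟨η₂, hη₂, hU2⟩ := ulam hPM.tf hτ η₁ hη₁.1
  set η := min η₁ η₂ with hηdef
  have hη : η ∈ Set.Ioo (0:ℝ) 1 :=
    ⟨lt_min hη₁.1 hη₂.1, lt_of_le_of_lt (min_le_left _ _) hη₁.2⟩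
  obtain ⟨n₀, hn₀⟩ := hp η hη.1 η hη
  refine ⟨n₀, fun n hn q hq r hr => ?_⟩
  obtain ⟨a, ⟨i, hi, rfl⟩, hqa⟩ := hq η hη.1
  obtain ⟨b, ⟨j, hj, rfl⟩, hrb⟩ := hr η hη.1
  have hin : n₀ ≤ i := le_trans hn hi
  have hjn : n₀ ≤ j := le_trans hn hj
  -- Step 1 : 1 - η₁ < 𝓕 (p i) r η₁
  have c1 : 1 - η₂ < 𝓕 (p i) (p j) η₂ := by
    have := hn₀ i hin j hjn
    have hmono := (hPM.ddf (p i) (p j)).1 (min_le_right η₁ η₂)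
    have : 1 - η ≤ 1 - min η₁ η₂ := le_of_eq (by rw [hηdef])
    linarith [hn₀ i hin j hjn, (hPM.ddf (p i) (p j)).1 (min_le_right η₁ η₂),
      min_le_right η₁ η₂]
  have c2 : 1 - η₂ < 𝓕 (p j) r η₂ := by
    have hsym : 𝓕 (p j) r = 𝓕 r (p j) := hPM.symm _ _
    rw [hsym]
    linarith [(hPM.ddf r (p j)).1 (min_le_right η₁ η₂), min_le_right η₁ η₂, hrb]
  have step1 : 1 - η₁ < 𝓕 (p i) r η₁ := by
    have := hU2 _ _ (hPM.ddf (p i) (p j)) (hPM.ddf (p j) r) c1 c2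
    linarith [hPM.tri (p i) (p j) r η₁]
  -- Step 2
  have c3 : 1 - η₁ < 𝓕 q (p i) η₁ := by
    linarith [(hPM.ddf q (p i)).1 (min_le_left η₁ η₂), min_le_left η₁ η₂, hqa]
  have := hU1 _ _ (hPM.ddf q (p i)) (hPM.ddf (p i) r) c3 step1
  linarith [hPM.tri q (p i) r c]

/-- **Cantor Intersection Theorem.** A PM space with continuous triangle
function is complete iff every nested sequence of nonempty strongly closed sets whose
probabilistic diameters tend pointwise to `H₀` has intersection consisting of exactly
one point. -/
theorem cantor_intersection {S : Type*} [Nonempty S]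
    (𝓕 : S → S → ℝ → ℝ) (τ : (ℝ → ℝ) → (ℝ → ℝ) → (ℝ → ℝ))
    (hPM : IsPMSpace 𝓕 τ) (hτ : ContinuousTF τ) :
    PMComplete 𝓕 ↔
      ∀ Sn : ℕ → Set S, (∀ n, (Sn n).Nonempty) → (∀ n, StrongClosed 𝓕 (Sn n)) →
        Antitone Sn →
        (∀ x : ℝ, Filter.Tendsto (fun n => probDiam 𝓕 (Sn n) x)
          Filter.atTop (nhds (H0 x))) →
        ∃ p : S, (⋂ n, Sn n) = {p} := by
  constructor
  · -- completeness implies the Cantor property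
    intro hcomp Sn hne hcl hanti hdiam
    choose q hq using hne
    have hc : PMCauchy 𝓕 q := by
      intro ε hε lam hlam
      have h1 : ∀ᶠ n in atTop, 1 - lam < probDiam 𝓕 (Sn n) ε := by
        have hx := hdiam ε
        rw [show H0 ε = 1 from if_neg (not_le.2 hε)] at hx
        exact hx.eventually (eventually_gt_nhds (by linarith [hlam.1]))
      obtain ⟨n₀, hn₀⟩ := eventually_atTop.1 h1
      have hD := hn₀ n₀ le_rfl
      rw [probDiam, if_neg (not_le.2 hε)] at hD
      have hex : ∃ y ∈ ((fun t => sInf ((fun pq : S × S => 𝓕 pq.1 pq.2 t) ''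
          (Sn n₀ ×ˢ Sn n₀))) '' Set.Iio ε), 1 - lam < y := by
        by_contra hcon
        push_neg at hcon
        have := Real.sSup_le (fun y hy => hcon y hy) (by linarith [hlam.2])
        linarith
      obtain ⟨y, ⟨t, htε, rfl⟩, hy⟩ := hex
      refine ⟨n₀, fun n hn m hm => ?_⟩
      have hmem : (q n, q m) ∈ (Sn n₀) ×ˢ (Sn n₀) :=
        ⟨hanti hn (hq n), hanti hm (hq m)⟩
      have h2 : sInf ((fun pq : S × S => 𝓕 pq.1 pq.2 t) '' (Sn n₀ ×ˢ Sn n₀)) ≤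
          𝓕 (q n) (q m) t :=
        csInf_le ⟨0, probDiam_bddBelow hPM.ddf _ t⟩ ⟨(q n, q m), hmem, rfl⟩
      have h3 := (hPM.ddf (q n) (q m)).1 (le_of_lt htε)
      linarith
    obtain ⟨p₀, hp₀⟩ := hcomp q hc
    have hmemI : ∀ n, p₀ ∈ Sn n := by
      intro n
      by_contra hpn
      obtain ⟨t, ht, hsub⟩ := hcl n p₀ hpn
      have hlam : min t (1/2) ∈ Set.Ioo (0:ℝ) 1 :=
        ⟨lt_min ht (by norm_num), lt_of_le_of_lt (min_le_right _ _) (by norm_num)⟩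
      obtain ⟨m₀, hm₀⟩ := hp₀ t ht (min t (1/2)) hlam
      have h1 : 1 - min t (1/2) < 𝓕 (q (max m₀ n)) p₀ t := hm₀ _ (le_max_left _ _)
      have h2 : q (max m₀ n) ∈ Npt 𝓕 p₀ t := by
        show 1 - t < 𝓕 p₀ (q (max m₀ n)) t
        rw [hPM.symm]
        linarith [min_le_left t (1/2:ℝ)]
      exact hsub h2 (hanti (le_max_right m₀ n) (hq (max m₀ n)))
    have huniq : ∀ a ∈ (⋂ n, Sn n), ∀ b ∈ (⋂ n, Sn n), a = b := by
      intro a ha b hb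
      by_contra hab
      apply hPM.ne a b hab
      funext x
      by_cases hx : x ≤ 0
      · rw [(hPM.ddf a b).2.2.2 x hx]
        exact (if_pos hx).symm
      · have h1 : ∀ n, probDiam 𝓕 (Sn n) x ≤ 𝓕 a b x := fun n =>
          probDiam_le_F hPM.ddf (Set.mem_iInter.1 ha n) (Set.mem_iInter.1 hb n) x
        have h2 : H0 x ≤ 𝓕 a b x :=
          le_of_tendsto (hdiam x) (Filter.Eventually.of_forall h1)
        have hH : H0 x = 1 := if_neg hx
        rw [hH] at h2
        rw [hH]
        exact le_antisymm ((hPM.ddf a b).2.2.1 x).2 h2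
    refine ⟨p₀, Set.eq_singleton_iff_unique_mem.2
      ⟨Set.mem_iInter.2 hmemI, fun y hy => huniq y hy p₀ (Set.mem_iInter.2 hmemI)⟩⟩
  · -- the Cantor property implies completeness
    intro hcant p hp
    have hTne : ∀ n, (scl 𝓕 (p '' Set.Ici n)).Nonempty :=
      fun n => ⟨p n, subset_scl hPM _ ⟨n, Set.self_mem_Ici, rfl⟩⟩
    have hTanti : Antitone (fun n => scl 𝓕 (p '' Set.Ici n)) := by
      intro n m hnm a ha t ht
      obtain ⟨b, ⟨i, hi, rfl⟩, hb⟩ := ha t ht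
      exact ⟨p i, ⟨i, le_trans hnm hi, rfl⟩, hb⟩
    have hTdiam : ∀ x : ℝ, Tendsto (fun n => probDiam 𝓕 (scl 𝓕 (p '' Set.Ici n)) x)
        atTop (𝓝 (H0 x)) := by
      intro x
      by_cases hx : x ≤ 0
      · simp only [probDiam, H0, if_pos hx]
        exact tendsto_const_nhds
      · push_neg at hx
        have hH : H0 x = 1 := if_neg (not_le.2 hx)
        rw [hH, Metric.tendsto_atTop]
        intro ε hε
        have hc : min (min x ε) 1 / 2 ∈ Set.Ioo (0:ℝ) 1 := by
          constructor
          · positivity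
          · have := min_le_right (min x ε) 1
            linarith
        obtain ⟨n₀, hn₀⟩ := key_tail hPM hτ hp hc
        refine ⟨n₀, fun n hn => ?_⟩
        have hcx : min (min x ε) 1 / 2 < x := by
          have h1 := min_le_left (min x ε) 1
          have h2 := min_le_left x ε
          linarith
        have h1 : 1 - min (min x ε) 1 / 2 ≤ probDiam 𝓕 (scl 𝓕 (p '' Set.Ici n)) x :=
          probDiam_ge hPM.ddf (hTne n) hcx
            (fun a ha b hb => (hn₀ n hn a ha b hb).le) hx
        have h2 := probDiam_le_one hPM.ddf (hTne n) x
        rw [Real.dist_eq]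
        have hcε : min (min x ε) 1 / 2 < ε := by
          have h3 := min_le_left (min x ε) 1
          have h4 := min_le_right x ε
          linarith
        have habs : |probDiam 𝓕 (scl 𝓕 (p '' Set.Ici n)) x - 1| ≤ min (min x ε) 1 / 2 :=
          abs_le.2 ⟨by linarith, by linarith [hc.1]⟩
        linarith
    obtain ⟨p₀, hp₀⟩ := hcant _ hTne (fun n => scl_closed hPM hτ _) hTanti hTdiam
    have hp₀mem : ∀ n, p₀ ∈ scl 𝓕 (p '' Set.Ici n) := by
      intro n
      have : p₀ ∈ ⋂ n, scl 𝓕 (p '' Set.Ici n) := by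
        rw [hp₀]; exact Set.mem_singleton _
      exact Set.mem_iInter.1 this n
    refine ⟨p₀, ?_⟩
    intro ε hε lam hlam
    have hc : min (min ε lam) 1 / 2 ∈ Set.Ioo (0:ℝ) 1 := by
      constructor
      · have := hlam.1
        positivity
      · have := min_le_right (min ε lam) 1
        linarith
    obtain ⟨n₀, hn₀⟩ := key_tail hPM hτ hp hc
    refine ⟨n₀, fun n hn => ?_⟩
    have h1 : 1 - min (min ε lam) 1 / 2 < 𝓕 (p n) p₀ (min (min ε lam) 1 / 2) :=
      hn₀ n hn (p n) (subset_scl hPM _ ⟨n, Set.self_mem_Ici, rfl⟩) p₀ (hp₀mem n)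
    have h2 := (hPM.ddf (p n) p₀).1 (show min (min ε lam) 1 / 2 ≤ ε by
      have h3 := min_le_left (min ε lam) 1
      have h4 := min_le_left ε lam
      linarith)
    have h5 : min (min ε lam) 1 / 2 ≤ lam := by
      have h3 := min_le_left (min ε lam) 1
      have h4 := min_le_right ε lam
      linarith [hlam.1]
    linarith
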